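/- arXiv:math/0408237 — 3 statements merged into one kernel-verified Lean document; each statement's English description precedes it below -/
import Mathlib

section
/- Let F be a conformal diffeomorphism of planar domains and γ̂_{λ,θ,η} a uniformly anisotropic conductivity on Ω. Then F_*γ̂_{λ,θ,η} is again a uniformly anisotropic conductivity γ̂_{λ,θ₀,η₀} on F(Ω) with the same constant λ and with η₀ = η ∘ F⁻¹. -/
open Matrix

/-- Rotation matrix by angle `t`. -/
noncomputable def Rot (t : ℝ) : Matrix (Fin 2) (Fin 2) ℝ :=
  !![Real.cos t, Real.sin t; -Real.sin t, Real.cos t]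

/-- The uniformly anisotropic conductivity `γ̂_{λ,θ,η}`. -/
noncomputable def gammaHat (l : ℝ) (th eta : (Fin 2 → ℝ) → ℝ) (x : Fin 2 → ℝ) :
    Matrix (Fin 2) (Fin 2) ℝ :=
  eta x • (Rot (th x) * !![Real.sqrt l, 0; 0, (Real.sqrt l)⁻¹] * (Rot (th x))⁻¹)

/-- Push-forward of a matrix conductivity. -/
noncomputable def pushfwd (Finv : (Fin 2 → ℝ) → (Fin 2 → ℝ))
    (J : (Fin 2 → ℝ) → Matrix (Fin 2) (Fin 2) ℝ)
    (γ : (Fin 2 → ℝ) → Matrix (Fin 2) (Fin 2) ℝ) (x : Fin 2 → ℝ) :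
    Matrix (Fin 2) (Fin 2) ℝ :=
  |(J (Finv x)).det|⁻¹ • (J (Finv x) * γ (Finv x) * (J (Finv x))ᵀ)


lemma Rot_mul (a b : ℝ) : Rot a * Rot b = Rot (a + b) := by
  ext i j
  fin_cases i <;> fin_cases j <;>
    simp [Rot, Matrix.mul_apply, Fin.sum_univ_two, Real.cos_add, Real.sin_add] <;> ring

lemma Rot_zero : Rot 0 = 1 := by
  ext i j
  fin_cases i <;> fin_cases j <;> simp [Rot]

lemma Rot_inv (t : ℝ) : (Rot t)⁻¹ = Rot (-t) := by
  apply inv_eq_right_inv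
  rw [Rot_mul, add_neg_cancel, Rot_zero]

lemma Rot_transpose (t : ℝ) : (Rot t)ᵀ = Rot (-t) := by
  ext i j
  fin_cases i <;> fin_cases j <;> simp [Rot]

lemma Rot_det (t : ℝ) : (Rot t).det = 1 := by
  simp [Rot, Matrix.det_fin_two_of]
  ring_nf
  rw [add_comm]
  exact Real.sin_sq_add_cos_sq t

/-- the push-forward of a uniformly anisotropic conductivity `γ̂_{λ,θ,η}` under
a conformal diffeomorphism `F` is `γ̂_{λ,θ₀,η∘F⁻¹}` for some angle function `θ₀`. -/
theorem conformal_pushforward_gammaHat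
    (Ω : Set (Fin 2 → ℝ)) (F Finv : (Fin 2 → ℝ) → (Fin 2 → ℝ))
    (J : (Fin 2 → ℝ) → Matrix (Fin 2) (Fin 2) ℝ)
    (hbij : Set.BijOn F Ω (F '' Ω))
    (hFinv : ∀ y ∈ Ω, Finv (F y) = y) (hFinvmem : ∀ x ∈ F '' Ω, Finv x ∈ Ω)
    (hconf : ∀ y ∈ Ω, ∃ r α : ℝ, 0 < r ∧ J y = r • Rot α)
    (l : ℝ) (hl : 1 ≤ l) (th eta : (Fin 2 → ℝ) → ℝ) (heta : ∀ y ∈ Ω, 0 < eta y) :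
    ∃ th0 : (Fin 2 → ℝ) → ℝ, ∀ x ∈ F '' Ω,
      pushfwd Finv J (gammaHat l th eta) x = gammaHat l th0 (eta ∘ Finv) x := by
  classical
  refine ⟨fun x => if h : ∃ r α : ℝ, 0 < r ∧ J (Finv x) = r • Rot α then
      th (Finv x) + h.choose_spec.choose else 0, ?_⟩
  rintro x ⟨y, hy, rfl⟩
  have hyx : Finv (F y) = y := hFinv y hy
  have h : ∃ r α : ℝ, 0 < r ∧ J y = r • Rot α := hconf y hy
  obtain ⟨hr, hJ⟩ := h.choose_spec.choose_spec
  set r := h.choose with hrdef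
  set α := h.choose_spec.choose with hadef
  simp only [pushfwd, gammaHat, Function.comp_apply, hyx]
  rw [dif_pos h]
  conv_lhs => rw [hJ]
  rw [Matrix.transpose_smul, Rot_transpose, Matrix.det_smul, Rot_det]
  have hdet : |r ^ Fintype.card (Fin 2) * 1| = r * r := by
    simp [abs_of_pos hr, pow_two, (mul_pos hr hr)]
  rw [hdet, Rot_inv, Rot_inv]
  simp only [Matrix.smul_mul, Matrix.mul_smul, smul_smul]
  rw [show (r * r)⁻¹ * (h.choose * (eta y * h.choose)) = eta y by
    rw [← hrdef]; field_simp]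
  congr 1
  rw [← Matrix.mul_assoc, ← Matrix.mul_assoc, Rot_mul, Matrix.mul_assoc, Rot_mul, neg_add]
  rw [add_comm α (th y)]
end

section
/- If F is a quasiconformal map of the unit disk with complex dilatation μ_F and σ is an isotropic conductivity on the disk, then the anisotropy of the push-forward σ̃ = F_*σ satisfies K(σ̃, x) = |μ_F(F⁻¹(x))| for x in the disk, and hence K(σ̃) = ‖μ_F‖_{L^∞}. -/
open Matrix Polynomial

/-- Push-forward of a matrix conductivity over a planar (complex) domain. -/
noncomputable def pushfwdC (Finv : ℂ → ℂ) (J : ℂ → Matrix (Fin 2) (Fin 2) ℝ)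
    (σ : ℂ → Matrix (Fin 2) (Fin 2) ℝ) (x : ℂ) : Matrix (Fin 2) (Fin 2) ℝ :=
  |(J (Finv x)).det|⁻¹ • (J (Finv x) * σ (Finv x) * (J (Finv x))ᵀ)

/-- The anisotropy `K = (√L − 1)/(√L + 1)` for eigenvalue ratio `L = λ₁/λ₂`. -/
noncomputable def aniso (l1 l2 : ℝ) : ℝ :=
  (Real.sqrt (l1 / l2) - 1) / (Real.sqrt (l1 / l2) + 1)

lemma aniso_aux (m1 m2 sz P Q mu : ℝ) (h2 : 0 < m2) (h12 : m2 ≤ m1)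
    (hs : 0 < sz) (hP : 0 < P) (hd : 0 < P - Q)
    (hsum : m1 + m2 = (sz / (P - Q)) * (2 * (P + Q)))
    (hprod : m1 * m2 = sz ^ 2)
    (hmu : 0 ≤ mu) (hmu2 : mu ^ 2 = Q / P) :
    aniso m1 m2 = mu := by
  have h1 : 0 < m1 := lt_of_lt_of_le h2 h12
  set u := Real.sqrt m1 with hu
  set v := Real.sqrt m2 with hv
  have hupos : 0 < u := Real.sqrt_pos.2 h1
  have hvpos : 0 < v := Real.sqrt_pos.2 h2
  have huv : v ≤ u := Real.sqrt_le_sqrt h12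
  have hu2 : u ^ 2 = m1 := Real.sq_sqrt h1.le
  have hv2 : v ^ 2 = m2 := Real.sq_sqrt h2.le
  have huvs : u * v = sz := by
    rw [hu, hv, ← Real.sqrt_mul h1.le, hprod, Real.sqrt_sq hs.le]
  have hstep : aniso m1 m2 = (u - v) / (u + v) := by
    rw [aniso, Real.sqrt_div' m1 h2.le, div_eq_div_iff (by positivity) (by positivity)]
    field_simp
    rw [← hu, ← hv]
  rw [hstep]
  have hsq : ((u - v) / (u + v)) ^ 2 = mu ^ 2 := by
    rw [div_pow, hmu2, div_eq_div_iff (by positivity) hP.ne']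
    have e1 : (u - v) ^ 2 = (m1 + m2) - 2 * sz := by rw [← hu2, ← hv2, ← huvs]; ring
    have e2 : (u + v) ^ 2 = (m1 + m2) + 2 * sz := by rw [← hu2, ← hv2, ← huvs]; ring
    rw [e1, e2, hsum]
    field_simp
    ring
  have hnn : 0 ≤ (u - v) / (u + v) := div_nonneg (by linarith) (by positivity)
  calc (u - v) / (u + v) = Real.sqrt (((u - v) / (u + v)) ^ 2) := (Real.sqrt_sq hnn).symm
    _ = Real.sqrt (mu ^ 2) := by rw [hsq]
    _ = mu := Real.sqrt_sq hmu

/-- for a quasiconformal self-map `F` of the unit disk with complex dilatation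
`μ_F` and an isotropic conductivity `σ = s·I`, the push-forward `σ̃ = F_*σ` has pointwise
anisotropy `K(σ̃,x) = |μ_F(F⁻¹(x))|`, and hence `K(σ̃) = ‖μ_F‖_∞`. -/
theorem qc_pushforward_anisotropy
    (F Finv : ℂ → ℂ) (μ : ℂ → ℂ) (J : ℂ → Matrix (Fin 2) (Fin 2) ℝ)
    (hbij : Set.BijOn F (Metric.ball (0:ℂ) 1) (Metric.ball (0:ℂ) 1))
    (hcont : ContinuousOn F (Metric.ball (0:ℂ) 1))
    (hFinv : ∀ z ∈ Metric.ball (0:ℂ) 1, Finv (F z) = z)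
    (hFinvmem : ∀ x ∈ Metric.ball (0:ℂ) 1, Finv x ∈ Metric.ball (0:ℂ) 1)
    (hdiff : ∀ z ∈ Metric.ball (0:ℂ) 1, DifferentiableAt ℝ F z)
    (hJ : ∀ z ∈ Metric.ball (0:ℂ) 1,
      J z = !![(fderiv ℝ F z 1).re, (fderiv ℝ F z Complex.I).re;
               (fderiv ℝ F z 1).im, (fderiv ℝ F z Complex.I).im])
    (hbeltrami : ∀ z ∈ Metric.ball (0:ℂ) 1,
      (fderiv ℝ F z 1 + Complex.I * fderiv ℝ F z Complex.I) / 2 =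
        μ z * ((fderiv ℝ F z 1 - Complex.I * fderiv ℝ F z Complex.I) / 2))
    (hk : ∃ k : ℝ, k < 1 ∧ ∀ z ∈ Metric.ball (0:ℂ) 1, ‖μ z‖ ≤ k)
    (s : ℂ → ℝ) (hs : ∀ z ∈ Metric.ball (0:ℂ) 1, 0 < s z)
    (σ : ℂ → Matrix (Fin 2) (Fin 2) ℝ)
    (hσ : ∀ z ∈ Metric.ball (0:ℂ) 1, σ z = s z • (1 : Matrix (Fin 2) (Fin 2) ℝ))
    (m1 m2 : ℂ → ℝ)
    (hm : ∀ x ∈ Metric.ball (0:ℂ) 1, m2 x ≤ m1 x ∧ 0 < m2 x ∧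
      (pushfwdC Finv J σ x).charpoly =
        (X - Polynomial.C (m1 x)) * (X - Polynomial.C (m2 x))) :
    (∀ x ∈ Metric.ball (0:ℂ) 1,
        aniso (m1 x) (m2 x) = ‖μ (Finv x)‖) ∧
    sSup ((fun x => aniso (m1 x) (m2 x)) '' Metric.ball (0:ℂ) 1) =
      sSup ((fun z => ‖μ z‖) '' Metric.ball (0:ℂ) 1) := by
  obtain ⟨k, hk1, hkb⟩ := hk
  have main : ∀ x ∈ Metric.ball (0:ℂ) 1,
      aniso (m1 x) (m2 x) = ‖μ (Finv x)‖ := by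
    intro x hx
    have hzb : Finv x ∈ Metric.ball (0:ℂ) 1 := hFinvmem x hx
    obtain ⟨h12, h2, hcp⟩ := hm x hx
    have hJz := hJ (Finv x) hzb
    have hσz := hσ (Finv x) hzb
    have hbel := hbeltrami (Finv x) hzb
    have hkz := hkb (Finv x) hzb
    have hsz := hs (Finv x) hzb
    set z := Finv x with hz
    set a := fderiv ℝ F z 1 with ha
    set b := fderiv ℝ F z Complex.I with hb
    set sz := s z with hszdef
    set d : ℝ := a.re * b.im - a.im * b.re with hdd
    set P := Complex.normSq ((a - Complex.I * b) / 2) with hPdef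
    set Q := Complex.normSq ((a + Complex.I * b) / 2) with hQdef
    -- trace and determinant of the push-forward
    have hMtr : (pushfwdC Finv J σ x).trace
        = |d|⁻¹ * (sz * (a.re ^ 2 + a.im ^ 2 + b.re ^ 2 + b.im ^ 2)) := by
      rw [pushfwdC, ← hz, hJz, hσz]
      simp [Matrix.trace_fin_two, Matrix.mul_apply, Fin.sum_univ_two, Matrix.det_fin_two_of,
        Matrix.transpose_apply, Matrix.vecHead, Matrix.vecTail, hdd, Matrix.vecMul, dotProduct]
      ring
    have hMdet : (pushfwdC Finv J σ x).det = (d ^ 2)⁻¹ * (sz ^ 2 * d ^ 2) := by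
      rw [pushfwdC, ← hz, hJz, hσz]
      have habs : |a.re * b.im - b.re * a.im|⁻¹ ^ 2 = (d ^ 2)⁻¹ := by
        rw [inv_pow, sq_abs, hdd]; ring_nf
      simp [Matrix.det_fin_two, Matrix.mul_apply, Fin.sum_univ_two, Matrix.det_fin_two_of,
        Matrix.transpose_apply, Matrix.vecHead, Matrix.vecTail, Matrix.vecMul, dotProduct]
      rw [show ∀ c p q u w : ℝ, c * p * (c * q) - c * u * (c * w) =
        c ^ 2 * (p * q - u * w) from fun _ _ _ _ _ => by ring, habs]
      rw [hdd]
      ring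
    -- trace and determinant from the characteristic polynomial
    have ht := Matrix.trace_eq_neg_charpoly_coeff (pushfwdC Finv J σ x)
    have hd := Matrix.det_eq_sign_charpoly_coeff (pushfwdC Finv J σ x)
    rw [hcp] at ht hd
    simp [Polynomial.coeff_mul, Finset.Nat.sum_antidiagonal_eq_sum_range_succ_mk,
      Finset.sum_range_succ, Polynomial.coeff_X, Polynomial.coeff_C] at ht hd
    have hsum0 : m1 x + m2 x
        = |d|⁻¹ * (sz * (a.re ^ 2 + a.im ^ 2 + b.re ^ 2 + b.im ^ 2)) := by
      rw [← hMtr, ht]; ring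
    have hprod0 : m1 x * m2 x = (d ^ 2)⁻¹ * (sz ^ 2 * d ^ 2) := by rw [← hMdet, hd]
    -- d ≠ 0
    have hdne : d ≠ 0 := by
      intro h0
      rw [h0] at hprod0
      simp at hprod0
      rcases hprod0 with h | h <;> nlinarith
    -- complex identities
    have hdPQ : d = P - Q := by
      rw [hdd, hPdef, hQdef]
      simp [Complex.normSq_apply, Complex.add_re, Complex.add_im, Complex.sub_re,
        Complex.sub_im, Complex.mul_re, Complex.mul_im, Complex.div_re, Complex.div_im,
        Complex.I_re, Complex.I_im, Complex.normSq_apply]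
      ring
    have hsumPQ : a.re ^ 2 + a.im ^ 2 + b.re ^ 2 + b.im ^ 2 = 2 * (P + Q) := by
      rw [hPdef, hQdef]
      simp [Complex.normSq_apply, Complex.add_re, Complex.add_im, Complex.sub_re,
        Complex.sub_im, Complex.mul_re, Complex.mul_im, Complex.div_re, Complex.div_im,
        Complex.I_re, Complex.I_im, Complex.normSq_apply]
      ring
    have hQP : Q = ‖μ z‖ ^ 2 * P := by
      rw [hQdef, hbel, Complex.normSq_mul, Complex.sq_norm, ← hPdef]
    have hPpos : 0 < P := by
      rcases eq_or_ne ((a - Complex.I * b) / 2) 0 with h0 | h0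
      · exfalso
        apply hdne
        rw [hdPQ, hPdef, hQdef, hbel, h0]
        simp
      · exact Complex.normSq_pos.2 h0
    have hμlt : ‖μ z‖ < 1 := lt_of_le_of_lt hkz hk1
    have hμnn : 0 ≤ ‖μ z‖ := norm_nonneg _
    clear_value z a b sz d P Q
    have hμsq : ‖μ z‖ ^ 2 < 1 := pow_lt_one₀ hμnn hμlt two_ne_zero
    have hdpos : 0 < d := by
      rw [hdPQ, hQP, show P - ‖μ z‖ ^ 2 * P = (1 - ‖μ z‖ ^ 2) * P
        from by ring]
      exact mul_pos (by linarith) hPpos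
    have habsd : |d| = d := abs_of_pos hdpos
    -- assemble hypotheses of aniso_aux
    have hsum : m1 x + m2 x = (sz / (P - Q)) * (2 * (P + Q)) := by
      rw [hsum0, habsd, hsumPQ, hdPQ]; ring
    have hprod : m1 x * m2 x = sz ^ 2 := by
      rw [hprod0]; field_simp
    have hmu2 : ‖μ z‖ ^ 2 = Q / P := by
      rw [hQP]; field_simp
    exact aniso_aux (m1 x) (m2 x) sz P Q (‖μ z‖) h2 h12 hsz hPpos
      (hdPQ ▸ hdpos) hsum hprod hμnn hmu2
  refine ⟨main, ?_⟩
  have himg : Finv '' Metric.ball (0:ℂ) 1 = Metric.ball (0:ℂ) 1 := by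
    apply subset_antisymm
    · rintro _ ⟨y, hy, rfl⟩; exact hFinvmem y hy
    · intro y hy; exact ⟨F y, hbij.mapsTo hy, hFinv y hy⟩
  have himg2 : (fun x => aniso (m1 x) (m2 x)) '' Metric.ball (0:ℂ) 1
      = (fun z => ‖μ z‖) '' Metric.ball (0:ℂ) 1 := by
    rw [Set.image_congr main,
      show (fun x => ‖μ (Finv x)‖) = (fun z => ‖μ z‖) ∘ Finv from rfl,
      Set.image_comp, himg]
  rw [himg2]
end

section
/- For a symmetric positive definite 2×2 matrix γ with eigenvalues λ₁ ≥ λ₂ > 0, the modulus of its Beltrami coefficient μ = (−γ₁₁ + γ₂₂ − 2iγ₁₂)/(γ₁₁ + γ₂₂ + 2√(det γ)) equals the anisotropy: |μ| = (√(λ₁/λ₂) − 1)/(√(λ₁/λ₂) + 1). -/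
open Matrix Polynomial

/-- The complex Beltrami coefficient of a symmetric 2×2 conductivity matrix. -/
noncomputable def beltramiCoeff (g : Matrix (Fin 2) (Fin 2) ℝ) : ℂ :=
  (-(g 0 0 : ℂ) + (g 1 1 : ℂ) - 2 * Complex.I * (g 0 1 : ℂ)) /
    ((g 0 0 : ℂ) + (g 1 1 : ℂ) + 2 * (Real.sqrt (g 0 0 * g 1 1 - g 0 1 ^ 2) : ℂ))

/-- for a symmetric positive definite 2×2 matrix with eigenvalues
`λ₁ ≥ λ₂ > 0`, `|μ| = (√(λ₁/λ₂) − 1)/(√(λ₁/λ₂) + 1)`. -/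
theorem beltrami_abs_eq_anisotropy (g : Matrix (Fin 2) (Fin 2) ℝ) (l1 l2 : ℝ)
    (hsym : g.IsSymm) (hl : l2 ≤ l1) (hpos : 0 < l2)
    (heig : g.charpoly = (X - Polynomial.C l1) * (X - Polynomial.C l2)) :
    ‖beltramiCoeff g‖ =
      (Real.sqrt (l1 / l2) - 1) / (Real.sqrt (l1 / l2) + 1) := by
  have hl1 : 0 < l1 := lt_of_lt_of_le hpos hl
  set a := g 0 0 with ha
  set d := g 1 1 with hd
  set b := g 0 1 with hb
  have hb' : g 1 0 = b := hsym.apply 0 1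
  have hexp : (X - Polynomial.C l1) * (X - Polynomial.C l2)
      = X ^ 2 - Polynomial.C (l1 + l2) * X + Polynomial.C (l1 * l2) := by
    rw [Polynomial.C_add, Polynomial.C_mul]; ring
  have hc1 : g.charpoly.coeff 1 = -(l1 + l2) := by
    rw [heig, hexp]; simp [Polynomial.coeff_X_pow]
  have hc0 : g.charpoly.coeff 0 = l1 * l2 := by
    rw [heig, hexp]; simp [Polynomial.coeff_X_pow]
  have htr : a + d = l1 + l2 := by
    have := Matrix.trace_eq_neg_charpoly_coeff g
    rw [show Fintype.card (Fin 2) - 1 = 1 from rfl, hc1, Matrix.trace_fin_two] at this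
    linarith [this]
  have hdet : a * d - b ^ 2 = l1 * l2 := by
    have := Matrix.det_eq_sign_charpoly_coeff g
    rw [hc0] at this
    rw [Matrix.det_fin_two, hb'] at this
    simpa [ha, hd, hb, sq] using this
  -- square roots
  have s1 := Real.sqrt_nonneg l1
  have s2pos : 0 < Real.sqrt l2 := Real.sqrt_pos.mpr hpos
  have hs1sq : Real.sqrt l1 ^ 2 = l1 := Real.sq_sqrt hl1.le
  have hs2sq : Real.sqrt l2 ^ 2 = l2 := Real.sq_sqrt hpos.le
  have hs12 : Real.sqrt l2 ≤ Real.sqrt l1 := Real.sqrt_le_sqrt hl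
  have hsdet : Real.sqrt (a * d - b ^ 2) = Real.sqrt l1 * Real.sqrt l2 := by
    rw [hdet, Real.sqrt_mul hl1.le]
  have hsdiv : Real.sqrt (l1 / l2) = Real.sqrt l1 / Real.sqrt l2 :=
    Real.sqrt_div hl1.le l2
  -- compute the absolute value
  unfold beltramiCoeff
  rw [← ha, ← hd, ← hb, norm_div]
  have hnum : (-(a:ℂ) + d - 2 * Complex.I * b)
      = ((d - a : ℝ) : ℂ) + ((-(2*b) : ℝ) : ℂ) * Complex.I := by
    push_cast; ring
  have hden : ((a:ℂ) + d + 2 * ((Real.sqrt (a * d - b ^ 2) : ℝ) : ℂ))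
      = (((a + d + 2 * Real.sqrt (a * d - b ^ 2)) : ℝ) : ℂ) := by
    push_cast; ring
  rw [hnum, hden, Complex.norm_add_mul_I, Complex.norm_real, Real.norm_eq_abs]
  have hnumv : Real.sqrt ((d - a) ^ 2 + (-(2*b)) ^ 2) = l1 - l2 := by
    have : (d - a) ^ 2 + (-(2*b)) ^ 2 = (l1 - l2) ^ 2 := by nlinarith
    rw [this, Real.sqrt_sq (by linarith)]
  have hdenv : a + d + 2 * Real.sqrt (a * d - b ^ 2)
      = (Real.sqrt l1 + Real.sqrt l2) ^ 2 := by
    rw [hsdet, htr]; nlinarith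
  rw [hnumv, hdenv, abs_of_pos (by positivity), hsdiv]
  have hsum : 0 < Real.sqrt l1 + Real.sqrt l2 := by positivity
  field_simp
  linear_combination (-1 : ℝ) * hs1sq +
    (1 : ℝ) * hs2sq
end
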